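/- Let n be a positive integer and a, b ≥ 1 with d := a + b ≤ n. Let G be drawn from the stochastic block model G_{2n, a/n, b/n} with degrees d_1,…,d_{2n}. Then the variance of the random variable ∑_{i=1}^{2n} (d − d_i)² is at most 84·d²·n. -/

import Mathlib

open MeasureTheory

/-- The Bernoulli measure on `Bool` with parameter `p`. -/
noncomputable def bern (p : ℝ) : Measure Bool :=
  p.toNNReal • Measure.dirac true + (1 - p).toNNReal • Measure.dirac false

/-- The stochastic block model `G_{2n,p,q}`: a symmetric random graph on `2n` vertices,
encoded by independent Bernoulli edge indicators `ω i j` (only the coordinates with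
`i ≤ j` are used by `adjOf`), where the pair `{i,j}` (self-loop pairs included) is an
edge with probability `p` if `i,j` are in the same community (`V₁ = {i | i < n}`,
`V₂ = {i | n ≤ i}`) and with probability `q` otherwise. -/
noncomputable def sbm (n : ℕ) (p q : ℝ) :
    Measure (Fin (2 * n) → Fin (2 * n) → Bool) :=
  Measure.pi fun i => Measure.pi fun j =>
    bern (if i.val < n ↔ j.val < n then p else q)

/-- The (symmetric, 0/1) adjacency matrix determined by the edge indicators `ω`. -/
noncomputable def adjOf {m : ℕ} (ω : Fin m → Fin m → Bool) : Matrix (Fin m) (Fin m) ℝ :=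
  Matrix.of fun i j => if i ≤ j then (if ω i j then 1 else 0) else (if ω j i then 1 else 0)

/-- The degree of vertex `i`. -/
noncomputable def deg {m : ℕ} (ω : Fin m → Fin m → Bool) (i : Fin m) : ℝ :=
  ∑ j, adjOf ω i j

/-- The spectral norm (ℓ²-operator norm) of a square real matrix. -/
noncomputable def specNorm {m : ℕ} (M : Matrix (Fin m) (Fin m) ℝ) : ℝ :=
  ‖Matrix.toEuclideanCLM (𝕜 := ℝ) M‖

/-- The expectation matrix `B = 𝔼[A]`: entries `a/n` within communities, `b/n` across. -/
noncomputable def Bmat (n : ℕ) (a b : ℝ) : Matrix (Fin (2*n)) (Fin (2*n)) ℝ :=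
  Matrix.of fun i j => if i.val < n ↔ j.val < n then a / n else b / n


open scoped ENNReal NNReal


lemma bern_isProb {p : ℝ} (h0 : 0 ≤ p) (h1 : p ≤ 1) : IsProbabilityMeasure (bern p) := by
  constructor
  simp only [bern, Measure.add_apply, Measure.smul_apply, smul_eq_mul,
    Measure.dirac_apply_of_mem (Set.mem_univ _), ENNReal.smul_def, mul_one]
  rw [← ENNReal.coe_add, ← Real.toNNReal_add h0 (by linarith)]
  norm_num

lemma integral_bern {p : ℝ} (h0 : 0 ≤ p) (h1 : p ≤ 1) (g : Bool → ℝ) :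
    ∫ b, g b ∂bern p = p * g true + (1 - p) * g false := by
  have e1 : (p.toNNReal • Measure.dirac true : Measure Bool)
      = ((p.toNNReal : ℝ≥0∞) • Measure.dirac true : Measure Bool) := rfl
  have e2 : ((1-p).toNNReal • Measure.dirac false : Measure Bool)
      = (((1-p).toNNReal : ℝ≥0∞) • Measure.dirac false : Measure Bool) := rfl
  unfold bern
  rw [e1, e2]
  haveI h3 : IsFiniteMeasure (((p.toNNReal : ℝ≥0∞)) • Measure.dirac (α := Bool) true) := by
    constructor; simp [Measure.smul_apply]
  haveI h4 : IsFiniteMeasure ((((1-p).toNNReal : ℝ≥0∞)) • Measure.dirac (α := Bool) false) := by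
    constructor; simp [Measure.smul_apply]
  rw [integral_add_measure Integrable.of_finite Integrable.of_finite,
    integral_smul_measure, integral_smul_measure, integral_dirac, integral_dirac]
  simp [ENNReal.coe_toReal, Real.coe_toNNReal p h0, Real.coe_toNNReal (1-p) (by linarith : (0:ℝ) ≤ 1 - p)]

lemma integral_pi_general {ι : Type*} [Fintype ι] {κ : ι → Type*} [∀ i, MeasurableSpace (κ i)]
    (ν : ∀ i, Measure (κ i)) [∀ i, SigmaFinite (ν i)] (f : ∀ i, κ i → ℝ) :
    ∫ x : ∀ i, κ i, ∏ i, f i (x i) ∂Measure.pi ν = ∏ i, ∫ x, f i x ∂ν i := by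
  letI : ∀ i, MeasureSpace (κ i) := fun i => ⟨ν i⟩
  exact MeasureTheory.integral_fintype_prod_eq_prod (μ := ν) f

lemma integral_pi_pi {m : ℕ} (ν : Fin m → Fin m → Measure Bool)
    [∀ i j, IsProbabilityMeasure (ν i j)] (h : Fin m → Fin m → Bool → ℝ) :
    ∫ ω : Fin m → Fin m → Bool, ∏ i, ∏ j, h i j (ω i j)
      ∂(Measure.pi fun i => Measure.pi fun j => ν i j)
    = ∏ i, ∏ j, ∫ b, h i j b ∂(ν i j) := by
  rw [integral_pi_general (fun i => Measure.pi fun j => ν i j) (fun i x => ∏ j, h i j (x j))]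
  exact Finset.prod_congr rfl fun i _ => integral_pi_general (fun j => ν i j) (fun j b => h i j b)

lemma integral_prod_coords {m : ℕ} (ν : Fin m → Fin m → Measure Bool)
    [∀ i j, IsProbabilityMeasure (ν i j)] (s : Finset (Fin m × Fin m))
    (g : Fin m × Fin m → Bool → ℝ) :
    ∫ ω : Fin m → Fin m → Bool, ∏ c ∈ s, g c (ω c.1 c.2)
      ∂(Measure.pi fun i => Measure.pi fun j => ν i j)
    = ∏ c ∈ s, ∫ b, g c b ∂(ν c.1 c.2) := by
  have key : ∀ F : Fin m × Fin m → ℝ, ∏ c ∈ s, F c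
      = ∏ i, ∏ j, (if (i, j) ∈ s then F (i, j) else 1) := by
    intro F
    rw [← Finset.prod_product']
    rw [show ((Finset.univ : Finset (Fin m)) ×ˢ (Finset.univ : Finset (Fin m)))
        = Finset.univ from Finset.univ_product_univ]
    rw [show (∏ c ∈ Finset.univ, if c ∈ s then F c else 1)
        = ∏ c ∈ Finset.univ ∩ s, F c from Finset.prod_ite_mem _ _ _]
    rw [Finset.univ_inter]
  have lhs : ∀ ω : Fin m → Fin m → Bool, ∏ c ∈ s, g c (ω c.1 c.2)
      = ∏ i, ∏ j, (if (i, j) ∈ s then g (i, j) (ω i j) else 1) := by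
    intro ω
    rw [key (fun c => g c (ω c.1 c.2))]
  simp_rw [lhs]
  rw [integral_pi_pi ν (fun i j b => if (i, j) ∈ s then g (i, j) b else 1)]
  rw [key (fun c => ∫ b, g c b ∂(ν c.1 c.2))]
  refine Finset.prod_congr rfl fun i _ => Finset.prod_congr rfl fun j _ => ?_
  by_cases hij : (i, j) ∈ s
  · simp [hij]
  · simp only [hij, if_false, integral_const, measureReal_def, measure_univ, ENNReal.toReal_one, smul_eq_mul,
      one_mul]

namespace SBMAux


variable {m : ℕ}

/-- centered bernoulli observable -/
def ψf (p : ℝ) (b : Bool) : ℝ := p - if b then 1 else 0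

noncomputable def μpi (P : Fin m → Fin m → ℝ) : Measure (Fin m → Fin m → Bool) :=
  Measure.pi fun i => Measure.pi fun j => bern (P i j)

def Zc (P : Fin m → Fin m → ℝ) (c : Fin m × Fin m) (ω : Fin m → Fin m → Bool) : ℝ :=
  ψf (P c.1 c.2) (ω c.1 c.2)

noncomputable def mom (P : Fin m → Fin m → ℝ) (k : ℕ) (c : Fin m × Fin m) : ℝ :=
  ∫ b, (ψf (P c.1 c.2) b) ^ k ∂bern (P c.1 c.2)

def cnt (c1 c2 c3 c4 c : Fin m × Fin m) : ℕ :=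
  (if c1 = c then 1 else 0) + (if c2 = c then 1 else 0) + (if c3 = c then 1 else 0)
    + (if c4 = c then 1 else 0)

lemma prod_pow_cnt (c1 c2 c3 c4 : Fin m × Fin m) (F : Fin m × Fin m → ℝ) :
    ∏ c ∈ ({c1, c2, c3, c4} : Finset (Fin m × Fin m)), F c ^ cnt c1 c2 c3 c4 c
      = F c1 * F c2 * F c3 * F c4 := by
  have h : ∀ c ∈ ({c1, c2, c3, c4} : Finset (Fin m × Fin m)), F c ^ cnt c1 c2 c3 c4 c
      = ((if c1 = c then F c else 1) * (if c2 = c then F c else 1))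
        * ((if c3 = c then F c else 1) * (if c4 = c then F c else 1)) := by
    intro c _
    unfold cnt
    rw [pow_add, pow_add, pow_add]
    split_ifs <;> simp <;> ring
  rw [Finset.prod_congr rfl h, Finset.prod_mul_distrib, Finset.prod_mul_distrib,
    Finset.prod_mul_distrib, Finset.prod_ite_eq, Finset.prod_ite_eq, Finset.prod_ite_eq,
    Finset.prod_ite_eq]
  simp [mul_assoc]


end SBMAux

namespace SBMAux

variable {m : ℕ}

lemma E4_eq (P : Fin m → Fin m → ℝ) (hP0 : ∀ i j, 0 ≤ P i j) (hP1 : ∀ i j, P i j ≤ 1)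
    (c1 c2 c3 c4 : Fin m × Fin m) :
    ∫ ω, Zc P c1 ω * Zc P c2 ω * Zc P c3 ω * Zc P c4 ω ∂μpi P
      = ∏ c ∈ ({c1, c2, c3, c4} : Finset (Fin m × Fin m)), mom P (cnt c1 c2 c3 c4 c) c := by
  haveI : ∀ i j, IsProbabilityMeasure (bern (P i j)) := fun i j => bern_isProb (hP0 i j) (hP1 i j)
  have point : ∀ ω : Fin m → Fin m → Bool,
      Zc P c1 ω * Zc P c2 ω * Zc P c3 ω * Zc P c4 ω
      = ∏ c ∈ ({c1, c2, c3, c4} : Finset (Fin m × Fin m)),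
          (fun c b => ψf (P c.1 c.2) b ^ cnt c1 c2 c3 c4 c) c (ω c.1 c.2) := by
    intro ω
    rw [prod_pow_cnt c1 c2 c3 c4 (fun c => ψf (P c.1 c.2) (ω c.1 c.2))]
    rfl
  simp_rw [point]
  simp only [μpi]
  have key := integral_prod_coords (fun i j => bern (P i j)) ({c1, c2, c3, c4} : Finset _)
    (fun c b => ψf (P c.1 c.2) b ^ cnt c1 c2 c3 c4 c)
  rw [key]
  rfl

lemma E2_eq (P : Fin m → Fin m → ℝ) (hP0 : ∀ i j, 0 ≤ P i j) (hP1 : ∀ i j, P i j ≤ 1)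
    (c1 c2 : Fin m × Fin m) :
    ∫ ω, Zc P c1 ω * Zc P c2 ω ∂μpi P
      = if c1 = c2 then mom P 2 c1 else 0 := by
  haveI : ∀ i j, IsProbabilityMeasure (bern (P i j)) := fun i j => bern_isProb (hP0 i j) (hP1 i j)
  have mom1 : ∀ c : Fin m × Fin m, mom P 1 c = 0 := by
    intro c
    unfold mom
    rw [integral_bern (hP0 c.1 c.2) (hP1 c.1 c.2)]
    simp [ψf]; ring
  by_cases h : c1 = c2
  · subst h
    have point : ∀ ω : Fin m → Fin m → Bool,
        Zc P c1 ω * Zc P c1 ω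
        = ∏ c ∈ ({c1} : Finset (Fin m × Fin m)),
            (fun c b => ψf (P c.1 c.2) b ^ 2) c (ω c.1 c.2) := by
      intro ω
      simp [Zc, sq]
    simp_rw [point]
    simp only [μpi]
    have key := integral_prod_coords (fun i j => bern (P i j)) ({c1} : Finset _)
      (fun c b => ψf (P c.1 c.2) b ^ 2)
    rw [key]
    simp [mom, if_pos rfl]
  · have point : ∀ ω : Fin m → Fin m → Bool,
        Zc P c1 ω * Zc P c2 ω
        = ∏ c ∈ ({c1, c2} : Finset (Fin m × Fin m)),
            (fun c b => ψf (P c.1 c.2) b ^ 1) c (ω c.1 c.2) := by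
      intro ω
      rw [Finset.prod_pair h]
      simp [Zc]
    simp_rw [point]
    simp only [μpi]
    have key := integral_prod_coords (fun i j => bern (P i j)) ({c1, c2} : Finset _)
      (fun c b => ψf (P c.1 c.2) b ^ 1)
    rw [key]
    rw [Finset.prod_pair h]
    have h1 := mom1 c1
    simp only [mom, pow_one] at h1
    simp [if_neg h, h1]

end SBMAux

namespace SBMAux

variable {m : ℕ}

def Dd {α : Type*} [DecidableEq α] (x y : α) : ℝ := if x = y then 1 else 0

lemma Dd_nonneg {α : Type*} [DecidableEq α] (x y : α) : 0 ≤ Dd x y := by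
  unfold Dd; split_ifs <;> norm_num

lemma Dd_self {α : Type*} [DecidableEq α] (x : α) : Dd x x = 1 := by simp [Dd]

lemma mom_eq (P : Fin m → Fin m → ℝ) (hP0 : ∀ i j, 0 ≤ P i j) (hP1 : ∀ i j, P i j ≤ 1)
    (k : ℕ) (c : Fin m × Fin m) :
    mom P k c = P c.1 c.2 * (P c.1 c.2 - 1) ^ k + (1 - P c.1 c.2) * P c.1 c.2 ^ k := by
  unfold mom
  rw [integral_bern (hP0 c.1 c.2) (hP1 c.1 c.2)]
  simp [ψf]

lemma mom_one (P : Fin m → Fin m → ℝ) (hP0 : ∀ i j, 0 ≤ P i j) (hP1 : ∀ i j, P i j ≤ 1)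
    (c : Fin m × Fin m) : mom P 1 c = 0 := by
  rw [mom_eq P hP0 hP1]; ring

lemma mom_two_nonneg (P : Fin m → Fin m → ℝ) (hP0 : ∀ i j, 0 ≤ P i j)
    (hP1 : ∀ i j, P i j ≤ 1) (c : Fin m × Fin m) : 0 ≤ mom P 2 c := by
  rw [mom_eq P hP0 hP1]
  have h0 := hP0 c.1 c.2; have h1 := hP1 c.1 c.2
  nlinarith

lemma mom_two_le (P : Fin m → Fin m → ℝ) (hP0 : ∀ i j, 0 ≤ P i j)
    (hP1 : ∀ i j, P i j ≤ 1) (c : Fin m × Fin m) : mom P 2 c ≤ P c.1 c.2 := by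
  rw [mom_eq P hP0 hP1]
  have h0 := hP0 c.1 c.2; have h1 := hP1 c.1 c.2
  nlinarith

lemma mom_four_le (P : Fin m → Fin m → ℝ) (hP0 : ∀ i j, 0 ≤ P i j)
    (hP1 : ∀ i j, P i j ≤ 1) (c : Fin m × Fin m) : mom P 4 c ≤ P c.1 c.2 := by
  rw [mom_eq P hP0 hP1]
  have h0 := hP0 c.1 c.2; have h1 := hP1 c.1 c.2
  nlinarith [sq_nonneg (P c.1 c.2), sq_nonneg (1 - P c.1 c.2), sq_nonneg (P c.1 c.2 * (1 - P c.1 c.2))]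

lemma E4_zero_of (P : Fin m → Fin m → ℝ) (hP0 : ∀ i j, 0 ≤ P i j) (hP1 : ∀ i j, P i j ≤ 1)
    (c1 c2 c3 c4 c : Fin m × Fin m) (hc : c ∈ ({c1, c2, c3, c4} : Finset (Fin m × Fin m)))
    (h1 : cnt c1 c2 c3 c4 c = 1) :
    ∫ ω, Zc P c1 ω * Zc P c2 ω * Zc P c3 ω * Zc P c4 ω ∂μpi P = 0 := by
  rw [E4_eq P hP0 hP1]
  exact Finset.prod_eq_zero hc (by rw [h1]; exact mom_one P hP0 hP1 c)

end SBMAux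

namespace SBMAux

variable {m : ℕ}

lemma rhs_nonneg {q : ℝ} (hq0 : 0 ≤ q) (c1 c2 c3 c4 : Fin m × Fin m) :
    0 ≤ q ^ 2 * (Dd c1 c3 * Dd c2 c4) + q ^ 2 * (Dd c1 c4 * Dd c2 c3)
      + q * (Dd c1 c2 * Dd c1 c3 * Dd c1 c4) := by
  have := Dd_nonneg c1 c3; have := Dd_nonneg c2 c4; have := Dd_nonneg c1 c4
  have := Dd_nonneg c2 c3; have := Dd_nonneg c1 c2
  have : (0:ℝ) ≤ q ^ 2 := sq_nonneg q
  positivity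

lemma T_bound (P : Fin m → Fin m → ℝ) (hP0 : ∀ i j, 0 ≤ P i j) (hP1 : ∀ i j, P i j ≤ 1)
    {q : ℝ} (hPq : ∀ i j, P i j ≤ q) (hq0 : 0 ≤ q) (c1 c2 c3 c4 : Fin m × Fin m) :
    (∫ ω, Zc P c1 ω * Zc P c2 ω * Zc P c3 ω * Zc P c4 ω ∂μpi P)
      - (∫ ω, Zc P c1 ω * Zc P c2 ω ∂μpi P) * (∫ ω, Zc P c3 ω * Zc P c4 ω ∂μpi P)
    ≤ q ^ 2 * (Dd c1 c3 * Dd c2 c4) + q ^ 2 * (Dd c1 c4 * Dd c2 c3)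
      + q * (Dd c1 c2 * Dd c1 c3 * Dd c1 c4) := by
  have hR := rhs_nonneg hq0 c1 c2 c3 c4
  have m2le : ∀ c : Fin m × Fin m, mom P 2 c ≤ q := fun c =>
    (mom_two_le P hP0 hP1 c).trans (hPq c.1 c.2)
  have m2nn := mom_two_nonneg P hP0 hP1
  have m4le : ∀ c : Fin m × Fin m, mom P 4 c ≤ q := fun c =>
    (mom_four_le P hP0 hP1 c).trans (hPq c.1 c.2)
  rw [E2_eq P hP0 hP1, E2_eq P hP0 hP1]
  by_cases h12 : c1 = c2
  · by_cases h34 : c3 = c4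
    · by_cases h13 : c1 = c3
      · subst h12; subst h34; subst h13
        rw [E4_eq P hP0 hP1]
        have hs : ({c1, c1, c1, c1} : Finset (Fin m × Fin m)) = {c1} := by simp
        rw [hs, Finset.prod_singleton]
        have hc : cnt c1 c1 c1 c1 c1 = 4 := by simp [cnt]
        rw [hc]
        simp only [eq_self_iff_true, if_true, Dd_self]
        have := m4le c1; have := m2nn c1
        nlinarith [sq_nonneg q]
      · subst h12; subst h34
        rw [E4_eq P hP0 hP1]
        have h31 : c3 ≠ c1 := fun e => h13 e.symm
        have hs : ({c1, c1, c3, c3} : Finset (Fin m × Fin m)) = {c1, c3} := by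
          ext x; simp <;> tauto
        rw [hs, Finset.prod_pair h13]
        have hc1 : cnt c1 c1 c3 c3 c1 = 2 := by simp [cnt, h31]
        have hc3 : cnt c1 c1 c3 c3 c3 = 2 := by simp [cnt, h13]
        rw [hc1, hc3]
        simp only [eq_self_iff_true, if_true]
        linarith
    · rw [if_neg h34, mul_zero]
      subst h12
      by_cases h31 : c3 = c1
      · have h14 : ¬ c1 = c4 := fun e => h34 (h31.trans e)
        have h34' : ¬ c3 = c4 := h34
        rw [E4_zero_of P hP0 hP1 _ _ _ _ c4 (by simp) (by simp [cnt, h14, h34'])]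
        linarith
      · have h13 : ¬ c1 = c3 := fun e => h31 e.symm
        have h43 : ¬ c4 = c3 := fun e => h34 e.symm
        rw [E4_zero_of P hP0 hP1 _ _ _ _ c3 (by simp) (by simp [cnt, h13, h43])]
        linarith
  · by_cases h34 : c3 = c4
    · rw [if_neg h12, zero_mul]
      subst h34
      by_cases h13 : c1 = c3
      · have h32 : ¬ c3 = c2 := fun e => h12 (h13.trans e)
        rw [E4_zero_of P hP0 hP1 _ _ _ _ c2 (by simp) (by simp [cnt, h12, h32])]
        linarith
      · have h21 : ¬ c2 = c1 := fun e => h12 e.symm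
        have h31 : ¬ c3 = c1 := fun e => h13 e.symm
        rw [E4_zero_of P hP0 hP1 _ _ _ _ c1 (by simp) (by simp [cnt, h21, h31])]
        linarith
    · rw [if_neg h34, mul_zero]
      by_cases h13 : c1 = c3
      · by_cases h24 : c2 = c4
        · subst h13; subst h24
          rw [E4_eq P hP0 hP1]
          have h21 : c2 ≠ c1 := fun e => h12 e.symm
          have hs : ({c1, c2, c1, c2} : Finset (Fin m × Fin m)) = {c1, c2} := by
            ext x; simp <;> tauto
          rw [hs, Finset.prod_pair h12]
          have hc1 : cnt c1 c2 c1 c2 c1 = 2 := by simp [cnt, h21]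
          have hc2 : cnt c1 c2 c1 c2 c2 = 2 := by simp [cnt, h12]
          rw [hc1, hc2]
          have e1 : Dd c1 c1 = 1 := Dd_self c1
          have e2 : Dd c2 c2 = 1 := Dd_self c2
          have := m2le c1; have := m2le c2; have := m2nn c1; have := m2nn c2
          have h1 : mom P 2 c1 * mom P 2 c2 ≤ q ^ 2 := by nlinarith
          have h2 : 0 ≤ q ^ 2 * (Dd c1 c2 * Dd c2 c1) := by
            have := Dd_nonneg c1 c2; have := Dd_nonneg c2 c1; positivity
          have h3 : 0 ≤ q * (Dd c1 c2 * 1 * Dd c1 c2) := by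
            have := Dd_nonneg c1 c2; positivity
          rw [e1, e2]
          nlinarith
        · subst h13
          have h42 : ¬ c4 = c2 := fun e => h24 e.symm
          rw [E4_zero_of P hP0 hP1 _ _ _ _ c2 (by simp) (by simp [cnt, h12, h42])]
          linarith
      · by_cases h14 : c1 = c4
        · by_cases h23 : c2 = c3
          · subst h14; subst h23
            rw [E4_eq P hP0 hP1]
            have h21 : c2 ≠ c1 := fun e => h12 e.symm
            have hs : ({c1, c2, c2, c1} : Finset (Fin m × Fin m)) = {c1, c2} := by
              ext x; simp <;> tauto
            rw [hs, Finset.prod_pair h12]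
            have hc1 : cnt c1 c2 c2 c1 c1 = 2 := by simp [cnt, h21]
            have hc2 : cnt c1 c2 c2 c1 c2 = 2 := by simp [cnt, h12]
            rw [hc1, hc2]
            have e1 : Dd c1 c1 = 1 := Dd_self c1
            have e2 : Dd c2 c2 = 1 := Dd_self c2
            have := m2le c1; have := m2le c2; have := m2nn c1; have := m2nn c2
            have h1 : mom P 2 c1 * mom P 2 c2 ≤ q ^ 2 := by nlinarith
            have h2 : 0 ≤ q ^ 2 * (Dd c1 c2 * Dd c2 c1) := by
              have := Dd_nonneg c1 c2; have := Dd_nonneg c2 c1; positivity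
            have h3 : 0 ≤ q * (Dd c1 c2 * Dd c1 c2 * 1) := by
              have := Dd_nonneg c1 c2; positivity
            rw [e1, e2]
            nlinarith
          · have h32 : ¬ c3 = c2 := fun e => h23 e.symm
            have h42 : ¬ c4 = c2 := fun e => h12 (h14.trans e)
            rw [E4_zero_of P hP0 hP1 _ _ _ _ c2 (by simp) (by simp [cnt, h12, h32, h42])]
            linarith
        · have h21 : ¬ c2 = c1 := fun e => h12 e.symm
          have h31 : ¬ c3 = c1 := fun e => h13 e.symm
          have h41 : ¬ c4 = c1 := fun e => h14 e.symm
          rw [E4_zero_of P hP0 hP1 _ _ _ _ c1 (by simp) (by simp [cnt, h21, h31, h41])]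
          linarith

end SBMAux

namespace SBMAux

open ProbabilityTheory

variable {Ωt : Type*} [Fintype Ωt] [MeasurableSpace Ωt] [MeasurableSingletonClass Ωt]

lemma memLp_two (μ : Measure Ωt) [IsFiniteMeasure μ] (f : Ωt → ℝ) : MemLp f 2 μ := by
  obtain ⟨C, hC⟩ := (Set.finite_range fun x => ‖f x‖).bddAbove
  exact MemLp.of_bound (measurable_of_finite f).aestronglyMeasurable C
    (Filter.Eventually.of_forall fun x => hC (Set.mem_range_self x))

lemma var_expand (μ : Measure Ωt) [IsProbabilityMeasure μ] {ι : Type*} [Fintype ι]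
    (Y : ι → Ωt → ℝ) :
    variance (fun ω => ∑ i, Y i ω ^ 2) μ
      = ∑ i, ∑ k, ((∫ ω, Y i ω ^ 2 * Y k ω ^ 2 ∂μ)
          - (∫ ω, Y i ω ^ 2 ∂μ) * (∫ ω, Y k ω ^ 2 ∂μ)) := by
  rw [variance_eq_sub (memLp_two μ _)]
  have h1 : (∫ ω, ((fun ω => ∑ i, Y i ω ^ 2) ^ 2) ω ∂μ)
      = ∑ i, ∑ k, ∫ ω, Y i ω ^ 2 * Y k ω ^ 2 ∂μ := by
    have hpt : ∀ ω, ((fun ω => ∑ i, Y i ω ^ 2) ^ 2) ω = ∑ i, ∑ k, Y i ω ^ 2 * Y k ω ^ 2 := by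
      intro ω
      simp [sq, Finset.sum_mul_sum]
    simp_rw [hpt]
    rw [integral_finset_sum _ fun i _ => Integrable.of_finite]
    exact Finset.sum_congr rfl fun i _ => integral_finset_sum _ fun k _ => Integrable.of_finite
  have h2 : (∫ ω, (∑ i, Y i ω ^ 2) ∂μ) = ∑ i, ∫ ω, Y i ω ^ 2 ∂μ :=
    integral_finset_sum _ fun i _ => Integrable.of_finite
  calc (∫ ω, ((fun ω => ∑ i, Y i ω ^ 2) ^ 2) ω ∂μ) - (∫ ω, (∑ i, Y i ω ^ 2) ∂μ) ^ 2
      = (∑ i, ∑ k, ∫ ω, Y i ω ^ 2 * Y k ω ^ 2 ∂μ)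
        - ∑ i, ∑ k, (∫ ω, Y i ω ^ 2 ∂μ) * (∫ ω, Y k ω ^ 2 ∂μ) := by
        rw [h1, h2, sq, Finset.sum_mul_sum]
    _ = _ := by
        rw [← Finset.sum_sub_distrib]
        exact Finset.sum_congr rfl fun i _ => by rw [← Finset.sum_sub_distrib]

lemma sum_mul_sum4 {κ : Type*} [Fintype κ] (A B : κ → κ → ℝ) :
    (∑ j1, ∑ j2, A j1 j2) * (∑ j3, ∑ j4, B j3 j4)
      = ∑ j1, ∑ j2, ∑ j3, ∑ j4, A j1 j2 * B j3 j4 := by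
  rw [Finset.sum_mul]
  refine Finset.sum_congr rfl fun j1 _ => ?_
  rw [Finset.sum_mul]
  refine Finset.sum_congr rfl fun j2 _ => ?_
  rw [Finset.mul_sum]
  refine Finset.sum_congr rfl fun j3 _ => ?_
  rw [Finset.mul_sum]

lemma sq_expand {κ : Type*} [Fintype κ] (A : κ → ℝ) :
    (∑ j, A j) ^ 2 = ∑ j1, ∑ j2, A j1 * A j2 := by
  simp [sq, Finset.sum_mul_sum]

lemma integral_sq_sq (μ : Measure Ωt) [IsFiniteMeasure μ] {κ : Type*} [Fintype κ]
    (W V : κ → Ωt → ℝ) :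
    ∫ ω, (∑ j, W j ω) ^ 2 * (∑ j, V j ω) ^ 2 ∂μ
      = ∑ j1, ∑ j2, ∑ j3, ∑ j4, ∫ ω, W j1 ω * W j2 ω * V j3 ω * V j4 ω ∂μ := by
  have hpt : ∀ ω, (∑ j, W j ω) ^ 2 * (∑ j, V j ω) ^ 2
      = ∑ j1, ∑ j2, ∑ j3, ∑ j4, W j1 ω * W j2 ω * V j3 ω * V j4 ω := by
    intro ω
    rw [sq_expand (fun j => W j ω), sq_expand (fun j => V j ω), sum_mul_sum4]
    refine Finset.sum_congr rfl fun j1 _ => ?_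
    refine Finset.sum_congr rfl fun j2 _ => ?_
    refine Finset.sum_congr rfl fun j3 _ => ?_
    refine Finset.sum_congr rfl fun j4 _ => ?_
    ring
  simp_rw [hpt]
  rw [integral_finset_sum _ fun _ _ => Integrable.of_finite]
  refine Finset.sum_congr rfl fun j1 _ => ?_
  rw [integral_finset_sum _ fun _ _ => Integrable.of_finite]
  refine Finset.sum_congr rfl fun j2 _ => ?_
  rw [integral_finset_sum _ fun _ _ => Integrable.of_finite]
  refine Finset.sum_congr rfl fun j3 _ => ?_
  exact integral_finset_sum _ fun _ _ => Integrable.of_finite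

lemma integral_sq (μ : Measure Ωt) [IsFiniteMeasure μ] {κ : Type*} [Fintype κ] (W : κ → Ωt → ℝ) :
    ∫ ω, (∑ j, W j ω) ^ 2 ∂μ = ∑ j1, ∑ j2, ∫ ω, W j1 ω * W j2 ω ∂μ := by
  have hpt : ∀ ω, (∑ j, W j ω) ^ 2 = ∑ j1, ∑ j2, W j1 ω * W j2 ω := by
    intro ω
    simp [sq, Finset.sum_mul_sum]
  simp_rw [hpt]
  rw [integral_finset_sum _ fun _ _ => Integrable.of_finite]
  exact Finset.sum_congr rfl fun j1 _ => integral_finset_sum _ fun _ _ => Integrable.of_finite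

end SBMAux

namespace SBMAux

variable {m : ℕ}

lemma Dd_le_one {α : Type*} [DecidableEq α] (x y : α) : Dd x y ≤ 1 := by
  unfold Dd; split_ifs <;> norm_num

def eps (i j : Fin m) : Fin m × Fin m := if i ≤ j then (i, j) else (j, i)

lemma eps_cases {i j k l : Fin m} (h : eps i j = eps k l) :
    (i = k ∧ j = l) ∨ (i = l ∧ j = k) := by
  unfold eps at h
  split_ifs at h <;> simp [Prod.ext_iff] at h <;> tauto

lemma Dd_eps_le (i j k l : Fin m) :
    Dd (eps i j) (eps k l) ≤ Dd i k * Dd j l + Dd i l * Dd j k := by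
  by_cases h : eps i j = eps k l
  · rcases eps_cases h with ⟨e1, e2⟩ | ⟨e1, e2⟩
    · subst e1; subst e2
      have h1 := mul_nonneg (Dd_nonneg i j) (Dd_nonneg j i)
      rw [Dd, if_pos h, Dd_self, Dd_self]
      linarith
    · subst e1; subst e2
      have h1 := mul_nonneg (Dd_nonneg i j) (Dd_nonneg j i)
      rw [Dd, if_pos h, Dd_self, Dd_self]
      linarith
  · rw [Dd, if_neg h]
    have h1 := mul_nonneg (Dd_nonneg i k) (Dd_nonneg j l)
    have h2 := mul_nonneg (Dd_nonneg i l) (Dd_nonneg j k)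
    linarith

lemma count1 : ∑ i : Fin m, ∑ k : Fin m, ∑ j1 : Fin m, ∑ j2 : Fin m, ∑ j3 : Fin m, ∑ j4 : Fin m,
    ((Dd i k * Dd j1 j3 + Dd i j3 * Dd j1 k) * (Dd i k * Dd j2 j4 + Dd i j4 * Dd j2 k))
    = (m:ℝ)^3 + 3*m^2 := by
  simp [Dd, mul_ite, ite_mul, one_mul, mul_one, zero_mul, mul_zero, Finset.sum_ite_eq,
    Finset.sum_ite_eq', Finset.sum_const, Finset.card_univ, mul_add, add_mul,
    Finset.sum_add_distrib]
  ring

lemma count2 : ∑ i : Fin m, ∑ k : Fin m, ∑ j1 : Fin m, ∑ j2 : Fin m, ∑ j3 : Fin m, ∑ j4 : Fin m,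
    ((Dd i k * Dd j1 j4 + Dd i j4 * Dd j1 k) * (Dd i k * Dd j2 j3 + Dd i j3 * Dd j2 k))
    = (m:ℝ)^3 + 3*m^2 := by
  simp [Dd, mul_ite, ite_mul, one_mul, mul_one, zero_mul, mul_zero, Finset.sum_ite_eq,
    Finset.sum_ite_eq', Finset.sum_const, Finset.card_univ, mul_add, add_mul,
    Finset.sum_add_distrib]
  ring

lemma count3 : ∑ i : Fin m, ∑ k : Fin m, ∑ j1 : Fin m, ∑ j2 : Fin m, ∑ j3 : Fin m, ∑ j4 : Fin m,
    ((Dd j1 j2 + Dd i j2 * Dd j1 i) *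
      ((Dd i k * Dd j1 j3 + Dd i j3 * Dd j1 k) * (Dd i k * Dd j1 j4 + Dd i j4 * Dd j1 k)))
    = 2*(m:ℝ)^2 + 6*m := by
  simp [Dd, mul_ite, ite_mul, one_mul, mul_one, zero_mul, mul_zero, Finset.sum_ite_eq,
    Finset.sum_ite_eq', Finset.sum_const, Finset.card_univ, mul_add, add_mul,
    Finset.sum_add_distrib]
  ring

end SBMAux


namespace SBMAux

open ProbabilityTheory

lemma const_mul_sum6 {κ : Type*} [Fintype κ] (c : ℝ) (f : κ → κ → κ → κ → κ → κ → ℝ) :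
    ∑ i, ∑ k, ∑ j1, ∑ j2, ∑ j3, ∑ j4, c * f i k j1 j2 j3 j4
      = c * ∑ i, ∑ k, ∑ j1, ∑ j2, ∑ j3, ∑ j4, f i k j1 j2 j3 j4 := by
  simp only [← Finset.mul_sum]

theorem main_aux {m : ℕ} (P : Fin m → Fin m → ℝ) {q : ℝ}
    (hP0 : ∀ i j, 0 ≤ P i j) (hPq : ∀ i j, P i j ≤ q) (hq0 : 0 ≤ q) (hq1 : q ≤ 1) :
    variance (fun ω => ∑ i, (∑ j, Zc P (eps i j) ω) ^ 2) (μpi P)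
      ≤ q ^ 2 * (2 * ((m:ℝ) ^ 3 + 3 * m ^ 2)) + q * (2 * (m:ℝ) ^ 2 + 6 * m) := by
  classical
  have hP1 : ∀ i j, P i j ≤ 1 := fun i j => (hPq i j).trans hq1
  haveI hbp : ∀ i j, IsProbabilityMeasure (bern (P i j)) :=
    fun i j => bern_isProb (hP0 i j) (hP1 i j)
  haveI : IsProbabilityMeasure (μpi P) := by unfold μpi; infer_instance
  have nn : ∀ x y : Fin m, 0 ≤ Dd x y := fun x y => Dd_nonneg x y
  have nnB : ∀ x y z w : Fin m, 0 ≤ Dd x z * Dd y w + Dd x w * Dd y z := fun x y z w =>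
    add_nonneg (mul_nonneg (nn _ _) (nn _ _)) (mul_nonneg (nn _ _) (nn _ _))
  -- per-term bound
  have htb : ∀ i k j1 j2 j3 j4 : Fin m,
      (∫ ω, Zc P (eps i j1) ω * Zc P (eps i j2) ω * Zc P (eps k j3) ω * Zc P (eps k j4) ω ∂μpi P)
        - (∫ ω, Zc P (eps i j1) ω * Zc P (eps i j2) ω ∂μpi P)
          * (∫ ω, Zc P (eps k j3) ω * Zc P (eps k j4) ω ∂μpi P)
      ≤ q ^ 2 * ((Dd i k * Dd j1 j3 + Dd i j3 * Dd j1 k) * (Dd i k * Dd j2 j4 + Dd i j4 * Dd j2 k))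
        + q ^ 2 * ((Dd i k * Dd j1 j4 + Dd i j4 * Dd j1 k) * (Dd i k * Dd j2 j3 + Dd i j3 * Dd j2 k))
        + q * ((Dd j1 j2 + Dd i j2 * Dd j1 i) *
            ((Dd i k * Dd j1 j3 + Dd i j3 * Dd j1 k) * (Dd i k * Dd j1 j4 + Dd i j4 * Dd j1 k))) := by
    intro i k j1 j2 j3 j4
    refine (T_bound P hP0 hP1 hPq hq0 (eps i j1) (eps i j2) (eps k j3) (eps k j4)).trans ?_
    have h13 := Dd_eps_le i j1 k j3
    have h24 := Dd_eps_le i j2 k j4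
    have h14 := Dd_eps_le i j1 k j4
    have h23 := Dd_eps_le i j2 k j3
    have h12 : Dd (eps i j1) (eps i j2) ≤ Dd j1 j2 + Dd i j2 * Dd j1 i := by
      have h := Dd_eps_le i j1 i j2
      rwa [Dd_self, one_mul] at h
    have t1 : q ^ 2 * (Dd (eps i j1) (eps k j3) * Dd (eps i j2) (eps k j4))
        ≤ q ^ 2 * ((Dd i k * Dd j1 j3 + Dd i j3 * Dd j1 k)
            * (Dd i k * Dd j2 j4 + Dd i j4 * Dd j2 k)) :=
      mul_le_mul_of_nonneg_left
        (mul_le_mul h13 h24 (Dd_nonneg _ _) (nnB i j1 k j3)) (sq_nonneg q)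
    have t2 : q ^ 2 * (Dd (eps i j1) (eps k j4) * Dd (eps i j2) (eps k j3))
        ≤ q ^ 2 * ((Dd i k * Dd j1 j4 + Dd i j4 * Dd j1 k)
            * (Dd i k * Dd j2 j3 + Dd i j3 * Dd j2 k)) :=
      mul_le_mul_of_nonneg_left
        (mul_le_mul h14 h23 (Dd_nonneg _ _) (nnB i j1 k j4)) (sq_nonneg q)
    have t3 : q * (Dd (eps i j1) (eps i j2) * Dd (eps i j1) (eps k j3) * Dd (eps i j1) (eps k j4))
        ≤ q * ((Dd j1 j2 + Dd i j2 * Dd j1 i) *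
            ((Dd i k * Dd j1 j3 + Dd i j3 * Dd j1 k)
              * (Dd i k * Dd j1 j4 + Dd i j4 * Dd j1 k))) := by
      refine mul_le_mul_of_nonneg_left ?_ hq0
      rw [mul_assoc]
      refine mul_le_mul h12 (mul_le_mul h13 h14 (Dd_nonneg _ _) (nnB i j1 k j3)) ?_ ?_
      · exact mul_nonneg (Dd_nonneg _ _) (Dd_nonneg _ _)
      · exact add_nonneg (Dd_nonneg _ _) (mul_nonneg (Dd_nonneg _ _) (Dd_nonneg _ _))
    exact add_le_add (add_le_add t1 t2) t3
  -- expand the variance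
  rw [var_expand (μpi P) (fun i ω => ∑ j, Zc P (eps i j) ω)]
  have hexp : ∀ i k : Fin m,
      ((∫ ω, (∑ j, Zc P (eps i j) ω) ^ 2 * (∑ j, Zc P (eps k j) ω) ^ 2 ∂μpi P)
        - (∫ ω, (∑ j, Zc P (eps i j) ω) ^ 2 ∂μpi P)
          * (∫ ω, (∑ j, Zc P (eps k j) ω) ^ 2 ∂μpi P))
      = ∑ j1, ∑ j2, ∑ j3, ∑ j4,
          ((∫ ω, Zc P (eps i j1) ω * Zc P (eps i j2) ω * Zc P (eps k j3) ω
              * Zc P (eps k j4) ω ∂μpi P)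
            - (∫ ω, Zc P (eps i j1) ω * Zc P (eps i j2) ω ∂μpi P)
              * (∫ ω, Zc P (eps k j3) ω * Zc P (eps k j4) ω ∂μpi P)) := by
    intro i k
    rw [integral_sq_sq (μpi P) (fun j ω => Zc P (eps i j) ω) (fun j ω => Zc P (eps k j) ω),
      integral_sq (μpi P) (fun j ω => Zc P (eps i j) ω),
      integral_sq (μpi P) (fun j ω => Zc P (eps k j) ω), sum_mul_sum4,
      ← Finset.sum_sub_distrib]
    refine Finset.sum_congr rfl fun j1 _ => ?_
    rw [← Finset.sum_sub_distrib]
    refine Finset.sum_congr rfl fun j2 _ => ?_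
    rw [← Finset.sum_sub_distrib]
    refine Finset.sum_congr rfl fun j3 _ => ?_
    rw [← Finset.sum_sub_distrib]
  calc (∑ i, ∑ k, ((∫ ω, (∑ j, Zc P (eps i j) ω) ^ 2 * (∑ j, Zc P (eps k j) ω) ^ 2 ∂μpi P)
          - (∫ ω, (∑ j, Zc P (eps i j) ω) ^ 2 ∂μpi P)
            * (∫ ω, (∑ j, Zc P (eps k j) ω) ^ 2 ∂μpi P)))
      = ∑ i, ∑ k, ∑ j1, ∑ j2, ∑ j3, ∑ j4,
          ((∫ ω, Zc P (eps i j1) ω * Zc P (eps i j2) ω * Zc P (eps k j3) ω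
              * Zc P (eps k j4) ω ∂μpi P)
            - (∫ ω, Zc P (eps i j1) ω * Zc P (eps i j2) ω ∂μpi P)
              * (∫ ω, Zc P (eps k j3) ω * Zc P (eps k j4) ω ∂μpi P)) :=
        Finset.sum_congr rfl fun i _ => Finset.sum_congr rfl fun k _ => hexp i k
    _ ≤ ∑ i, ∑ k, ∑ j1, ∑ j2, ∑ j3, ∑ j4,
          (q ^ 2 * ((Dd i k * Dd j1 j3 + Dd i j3 * Dd j1 k)
              * (Dd i k * Dd j2 j4 + Dd i j4 * Dd j2 k))
            + q ^ 2 * ((Dd i k * Dd j1 j4 + Dd i j4 * Dd j1 k)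
              * (Dd i k * Dd j2 j3 + Dd i j3 * Dd j2 k))
            + q * ((Dd j1 j2 + Dd i j2 * Dd j1 i) *
                ((Dd i k * Dd j1 j3 + Dd i j3 * Dd j1 k)
                  * (Dd i k * Dd j1 j4 + Dd i j4 * Dd j1 k)))) :=
        Finset.sum_le_sum fun i _ => Finset.sum_le_sum fun k _ =>
          Finset.sum_le_sum fun j1 _ => Finset.sum_le_sum fun j2 _ =>
            Finset.sum_le_sum fun j3 _ => Finset.sum_le_sum fun j4 _ => htb i k j1 j2 j3 j4
    _ ≤ q ^ 2 * (2 * ((m:ℝ) ^ 3 + 3 * m ^ 2)) + q * (2 * (m:ℝ) ^ 2 + 6 * m) := by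
        simp only [Finset.sum_add_distrib]
        rw [const_mul_sum6 (q ^ 2) (fun i k j1 j2 j3 j4 =>
            (Dd i k * Dd j1 j3 + Dd i j3 * Dd j1 k) * (Dd i k * Dd j2 j4 + Dd i j4 * Dd j2 k)),
          const_mul_sum6 (q ^ 2) (fun i k j1 j2 j3 j4 =>
            (Dd i k * Dd j1 j4 + Dd i j4 * Dd j1 k) * (Dd i k * Dd j2 j3 + Dd i j3 * Dd j2 k)),
          const_mul_sum6 q (fun i k j1 j2 j3 j4 =>
            (Dd j1 j2 + Dd i j2 * Dd j1 i) * ((Dd i k * Dd j1 j3 + Dd i j3 * Dd j1 k)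
              * (Dd i k * Dd j1 j4 + Dd i j4 * Dd j1 k))),
          count1, count2, count3]
        have h1 : (0:ℝ) ≤ (m:ℝ) ^ 3 + 3 * m ^ 2 := by positivity
        nlinarith [sq_nonneg q]

end SBMAux

open ProbabilityTheory

/-- If `a, b ≥ 1` and `d := a + b ≤ n`, then for `G ∼ G_{2n,a/n,b/n}`,
the variance of `∑_{i} (d - d_i)²` is at most `84·d²·n`. -/
theorem stmt10 (n : ℕ) (hn : 0 < n) (a b : ℝ) (ha : 1 ≤ a) (hb : 1 ≤ b)
    (hdn : a + b ≤ n) :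
    variance (fun ω => ∑ i, ((a + b) - deg ω i) ^ 2) (sbm n (a / n) (b / n))
      ≤ 84 * (a + b) ^ 2 * n := by
  classical
  have hn' : (0:ℝ) < n := by exact_mod_cast hn
  have ha0 : (0:ℝ) < a := by linarith
  have hb0 : (0:ℝ) < b := by linarith
  set P : Fin (2*n) → Fin (2*n) → ℝ :=
    fun i j => if i.val < n ↔ j.val < n then a / n else b / n with hPdef
  set q : ℝ := (a + b) / n with hqdef
  have hP0 : ∀ i j, 0 ≤ P i j := by
    intro i j; simp only [hPdef]; split_ifs <;> positivity
  have hPq : ∀ i j, P i j ≤ q := by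
    intro i j; simp only [hPdef, hqdef]; split_ifs <;> gcongr <;> linarith
  have hq0 : (0:ℝ) ≤ q := by positivity
  have hq1 : q ≤ 1 := by rw [hqdef, div_le_one hn']; exact hdn
  -- the measure is `μpi P`
  have hμ : sbm n (a / n) (b / n) = SBMAux.μpi P := by rw [hPdef]; rfl
  -- counting vertices in each community
  have hcard1 : (Finset.univ.filter (fun j : Fin (2*n) => (j:ℕ) < n)).card = n := by
    have hIio : Finset.univ.filter (fun j : Fin (2*n) => (j:ℕ) < n)
        = Finset.Iio (⟨n, by omega⟩ : Fin (2*n)) := by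
      ext x; simp [Finset.mem_Iio, Fin.lt_def]
    rw [hIio, Fin.card_Iio]
  have hcard2 : (Finset.univ.filter (fun j : Fin (2*n) => ¬ ((j:ℕ) < n))).card = n := by
    have htot := Finset.card_filter_add_card_filter_not
      (s := (Finset.univ : Finset (Fin (2*n)))) (p := fun j : Fin (2*n) => (j:ℕ) < n)
    rw [Finset.card_univ, Fintype.card_fin, hcard1] at htot
    omega
  -- row sums of P
  have hsumP : ∀ i : Fin (2*n), ∑ j, P i j = a + b := by
    intro i
    by_cases hi : (i:ℕ) < n
    · have : ∀ j : Fin (2*n), P i j = if (j:ℕ) < n then a / n else b / n := by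
        intro j; simp only [hPdef]
        have hcond : (((i:ℕ) < n ↔ (j:ℕ) < n)) ↔ ((j:ℕ) < n) := by simp [hi]
        rw [if_congr hcond rfl rfl]
      rw [Finset.sum_congr rfl fun j _ => this j, Finset.sum_ite, Finset.sum_const,
        Finset.sum_const, hcard1, hcard2]
      simp only [nsmul_eq_mul]
      field_simp
    · have : ∀ j : Fin (2*n), P i j = if (j:ℕ) < n then b / n else a / n := by
        intro j; simp only [hPdef]
        by_cases hj : (j:ℕ) < n
        · rw [if_neg (by simp [hi, hj]), if_pos hj]
        · rw [if_pos (by simp [hi, hj]), if_neg hj]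
      rw [Finset.sum_congr rfl fun j _ => this j, Finset.sum_ite, Finset.sum_const,
        Finset.sum_const, hcard1, hcard2]
      simp only [nsmul_eq_mul]
      field_simp
      ring
  -- rewrite the summand
  have hZ : ∀ (ω : Fin (2*n) → Fin (2*n) → Bool) (i j : Fin (2*n)),
      SBMAux.Zc P (SBMAux.eps i j) ω = P i j - adjOf ω i j := by
    intro ω i j
    by_cases hij : i ≤ j
    · simp [SBMAux.Zc, SBMAux.ψf, SBMAux.eps, adjOf, hij]
    · have hP' : P j i = P i j := by
        simp only [hPdef]; exact if_congr Iff.comm rfl rfl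
      simp [SBMAux.Zc, SBMAux.ψf, SBMAux.eps, adjOf, hij, hP']
  have hdeg : ∀ (ω : Fin (2*n) → Fin (2*n) → Bool) (i : Fin (2*n)),
      (a + b) - deg ω i = ∑ j, SBMAux.Zc P (SBMAux.eps i j) ω := by
    intro ω i
    calc (a + b) - deg ω i = ∑ j, (P i j - adjOf ω i j) := by
          rw [Finset.sum_sub_distrib, hsumP i, deg]
      _ = ∑ j, SBMAux.Zc P (SBMAux.eps i j) ω :=
          Finset.sum_congr rfl fun j _ => (hZ ω i j).symm
  have hfun : (fun ω : Fin (2*n) → Fin (2*n) → Bool => ∑ i, ((a + b) - deg ω i) ^ 2)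
      = fun ω => ∑ i, (∑ j, SBMAux.Zc P (SBMAux.eps i j) ω) ^ 2 := by
    funext ω
    exact Finset.sum_congr rfl fun i _ => by rw [hdeg ω i]
  rw [hμ, hfun]
  refine (SBMAux.main_aux P hP0 hPq hq0 hq1).trans ?_
  -- final arithmetic
  have hqn : q * n = a + b := by rw [hqdef]; field_simp
  have h2 : (2:ℝ) ≤ a + b := by linarith
  have hn2 : (2:ℝ) ≤ n := by linarith
  have hcast : ((2*n : ℕ) : ℝ) = 2 * (n:ℝ) := by push_cast; ring
  rw [hcast]
  have hab : (a + b) ^ 2 * (n:ℝ) = q^2 * n^3 := by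
    rw [← hqn]; ring
  rw [show (84:ℝ) * (a + b) ^ 2 * n = 84 * (q^2 * n^3) by rw [← hab]; ring]
  have f1 : 0 ≤ q * q * (n:ℝ) * n * ((n:ℝ) - 2) :=
    mul_nonneg (mul_nonneg (mul_nonneg (mul_nonneg hq0 hq0) hn'.le) hn'.le) (by linarith)
  have f2 : 0 ≤ q * (n:ℝ) * n * (q * n - 2) :=
    mul_nonneg (mul_nonneg (mul_nonneg hq0 hn'.le) hn'.le) (by rw [hqn]; linarith)
  have f3 : 0 ≤ q * (n:ℝ) * (q * n * n - 4) := by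
    refine mul_nonneg (mul_nonneg hq0 hn'.le) ?_
    have : (4:ℝ) ≤ q * n * n := by
      calc (4:ℝ) = 2 * 2 := by norm_num
        _ ≤ (q * n) * n := by
            rw [hqn]
            exact mul_le_mul h2 hn2 (by norm_num) (by linarith)
    linarith
  have f4 : 0 ≤ q * q * (n:ℝ)^3 := by positivity
  nlinarith [f1, f2, f3, f4]
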